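/- Let X be a real matrix whose columns are partitioned into finitely many blocks X_1, …, X_V (so X is the column-wise concatenation [X_1, X_2, …, X_V]). If the blocks are pairwise column-wise orthogonal, i.e., X_vᵀ X_{v'} = 0 for all v ≠ v', then ∑_{v=1}^{V} ‖X_v‖_* = ‖X‖_*, so the quantity ∑_{v} ‖X_v‖_* − ‖X‖_* attains its global minimum value 0. -/

import Mathlib

open Matrix

/-- The square root of a real positive semidefinite matrix, via the spectral theorem. -/
noncomputable def Matrix.PosSemidef.sqrt {n : Type*} [Fintype n] [DecidableEq n]
    {A : Matrix n n ℝ} (hA : PosSemidef A) : Matrix n n ℝ :=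
  hA.1.eigenvectorUnitary * diagonal (Real.sqrt ∘ hA.1.eigenvalues) *
    (star hA.1.eigenvectorUnitary : Matrix n n ℝ)

open scoped MatrixOrder in
lemma Matrix.PosSemidef.sqrt_eq_cfc_sqrt {n : Type*} [Fintype n] [DecidableEq n]
    {A : Matrix n n ℝ} (hA : PosSemidef A) : hA.sqrt = CFC.sqrt A := by
  rw [CFC.sqrt_eq_cfc, cfc_nnreal_eq_real _ A, hA.1.cfc_eq]
  simp only [IsHermitian.cfc, Real.coe_sqrt, Real.coe_toNNReal', Unitary.conjStarAlgAut_apply,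
    Matrix.PosSemidef.sqrt]
  congr 3
  funext i
  simp [max_eq_left (hA.eigenvalues_nonneg i)]

open scoped MatrixOrder in
lemma Matrix.PosSemidef.posSemidef_sqrt {n : Type*} [Fintype n] [DecidableEq n]
    {A : Matrix n n ℝ} (hA : PosSemidef A) : hA.sqrt.PosSemidef := by
  rw [hA.sqrt_eq_cfc_sqrt]
  exact (CFC.sqrt_nonneg A).posSemidef

open scoped MatrixOrder in
lemma Matrix.PosSemidef.sqrt_mul_self {n : Type*} [Fintype n] [DecidableEq n]
    {A : Matrix n n ℝ} (hA : PosSemidef A) : hA.sqrt * hA.sqrt = A := by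
  rw [hA.sqrt_eq_cfc_sqrt]
  exact CFC.sqrt_mul_sqrt_self A hA.nonneg

open scoped MatrixOrder in
lemma Matrix.PosSemidef.eq_sqrt_of_sq_eq {n : Type*} [Fintype n] [DecidableEq n]
    {A B : Matrix n n ℝ} (hA : PosSemidef A) (hB : PosSemidef B) (hAB : A ^ 2 = B) :
    A = hB.sqrt := by
  rw [hB.sqrt_eq_cfc_sqrt]
  exact (CFC.sqrt_unique (by rw [← sq]; exact hAB) hA.nonneg).symm

lemma trace_sqrt_eq {n : Type*} [Fintype n] [DecidableEq n] {A : Matrix n n ℝ}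
    (hA : PosSemidef A) :
    hA.sqrt.trace = ∑ i, Real.sqrt (hA.1.eigenvalues i) := by
  rw [PosSemidef.sqrt, trace_mul_comm, ← mul_assoc]
  have : (star hA.1.eigenvectorUnitary : Matrix n n ℝ) * hA.1.eigenvectorUnitary.1 = 1 := by
    simpa using hA.1.eigenvectorUnitary.2.1
  rw [this, one_mul, trace_diagonal]
  simp

lemma posSemidef_blockDiagonal' {V : Type*} {n : V → Type*} [Fintype V] [DecidableEq V]
    [∀ v, Fintype (n v)] [∀ v, DecidableEq (n v)] {A : ∀ v, Matrix (n v) (n v) ℝ}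
    (h : ∀ v, (A v).PosSemidef) : (blockDiagonal' A).PosSemidef := by
  refine PosSemidef.of_dotProduct_mulVec_nonneg ?_ ?_
  · rw [IsHermitian, blockDiagonal'_conjTranspose]
    have : (fun v => (A v)ᴴ) = A := funext fun v => (h v).1
    rw [this]
  · intro x
    have hmv : ∀ (v : V) (i : n v), (blockDiagonal' A *ᵥ x) ⟨v, i⟩
        = (A v *ᵥ fun j => x ⟨v, j⟩) i := by
      intro v i
      simp only [mulVec, dotProduct]
      rw [← Finset.univ_sigma_univ, Finset.sum_sigma, Finset.sum_eq_single v]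
      · simp [blockDiagonal'_apply_eq]
      · intro v' _ hv'
        simp [blockDiagonal'_apply_ne _ _ _ (Ne.symm hv')]
      · simp
    have : dotProduct (star x) (blockDiagonal' A *ᵥ x)
        = ∑ v, dotProduct (star fun j => x ⟨v, j⟩) (A v *ᵥ fun j => x ⟨v, j⟩) := by
      simp only [dotProduct]
      rw [← Finset.univ_sigma_univ, Finset.sum_sigma]
      refine Finset.sum_congr rfl fun v _ => Finset.sum_congr rfl fun i _ => ?_
      simp [hmv]
    rw [this]
    exact Finset.sum_nonneg fun v _ => (h v).dotProduct_mulVec_nonneg _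


/-- The nuclear norm of a real matrix `A`: the sum of its singular values, i.e. the sum of the
square roots of the eigenvalues of the positive semidefinite symmetric matrix `Aᵀ * A`. -/
noncomputable def nuclearNorm {m n : Type*} [Fintype m] [Fintype n] [DecidableEq n]
    (A : Matrix m n ℝ) : ℝ :=
  ∑ i, Real.sqrt ((show (Aᵀ * A).IsHermitian by simpa using Matrix.isHermitian_conjTranspose_mul_self A).eigenvalues i)

lemma nuclearNorm_eq_trace {m n : Type*} [Fintype m] [Fintype n] [DecidableEq n]
    (A : Matrix m n ℝ) {B : Matrix n n ℝ} (hB : B.PosSemidef) (h : Aᵀ * A = B) :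
    nuclearNorm A = hB.sqrt.trace := by
  subst h
  rw [trace_sqrt_eq]
  rfl


/-- For a real matrix `X` whose columns are partitioned into finitely many blocks `X_v`
(columns indexed by a sigma type), if the blocks are pairwise column-wise orthogonal,
i.e. `X_vᵀ * X_{v'} = 0` for all `v ≠ v'`, then the sum of the nuclear norms of the blocks
equals the nuclear norm of the full matrix; hence the quantity
`∑ v, ‖X_v‖_* − ‖X‖_*` attains its global minimum value `0`. -/
theorem sum_nuclearNorm_blocks_eq_nuclearNorm_of_orthogonal
    {m V : Type*} {n : V → Type*} [Fintype m] [Fintype V] [DecidableEq V]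
    [∀ v, Fintype (n v)] [∀ v, DecidableEq (n v)]
    (X : Matrix m (Σ v, n v) ℝ)
    (horth : ∀ v v' : V, v ≠ v' →
      (X.submatrix id (Sigma.mk v))ᵀ * (X.submatrix id (Sigma.mk v')) = 0) :
    (∑ v, nuclearNorm (X.submatrix id (Sigma.mk v))) = nuclearNorm X ∧
      (∑ v, nuclearNorm (X.submatrix id (Sigma.mk v))) - nuclearNorm X = 0 := by
  set Xv : ∀ v, Matrix m (n v) ℝ := fun v => X.submatrix id (Sigma.mk v) with hXv
  have hpos : ∀ v, ((Xv v)ᵀ * Xv v).PosSemidef := fun v =>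
    posSemidef_conjTranspose_mul_self (Xv v)
  have hBD : Xᵀ * X = blockDiagonal' (fun v => (Xv v)ᵀ * Xv v) := by
    ext ⟨v, i⟩ ⟨v', j⟩
    rcases eq_or_ne v v' with rfl | hne
    · simp [blockDiagonal'_apply_eq, mul_apply, hXv]
    · rw [blockDiagonal'_apply_ne _ _ _ hne]
      have := congrFun (congrFun (horth v v' hne) i) j
      simpa [mul_apply] using this
  have hBDpos : (blockDiagonal' (fun v => (Xv v)ᵀ * Xv v)).PosSemidef :=
    posSemidef_blockDiagonal' hpos
  have hs : blockDiagonal' (fun v => (hpos v).sqrt) = hBDpos.sqrt := by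
    refine (posSemidef_blockDiagonal' (fun v => (hpos v).posSemidef_sqrt)).eq_sqrt_of_sq_eq
      hBDpos ?_
    rw [pow_two, ← blockDiagonal'_mul]
    have : (fun v => (hpos v).sqrt * (hpos v).sqrt) = fun v => (Xv v)ᵀ * Xv v :=
      funext fun v => (hpos v).sqrt_mul_self
    rw [this]
  have key : (∑ v, nuclearNorm (Xv v)) = nuclearNorm X := by
    rw [nuclearNorm_eq_trace X hBDpos hBD, ← hs, trace_blockDiagonal']
    exact Finset.sum_congr rfl fun v _ => nuclearNorm_eq_trace (Xv v) (hpos v) rfl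
  exact ⟨key, by rw [key, sub_self]⟩
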